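/- Let t be a positive integer and let U, V ⊆ G be finite sets with t ≤ |V| ≤ |U|. Then ∑_{x ∈ G} min(1_U*1_V(x), t) ≥ t·(|U| + |V| − t − α), where α := α(U, V). (The sum has finitely many nonzero terms, since 1_U*1_V(x) = 0 unless x ∈ U+V.) -/

import Mathlib

open Pointwise

/-- `alphaFn U V` is the maximum of `|V'|` over all finite subsets `V' ⊆ G` such that
`|V'| ≤ |V|` and the subgroup `⟨V'⟩` generated by `V'` is finite with
`|⟨V'⟩| ≤ |U| + |V| - |V'|`. -/
noncomputable def alphaFn {G : Type*} [AddCommGroup G] (U V : Finset G) : ℕ :=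
  sSup {k : ℕ | ∃ V' : Finset G, V'.card = k ∧ V'.card ≤ V.card ∧
    0 < Nat.card (AddSubgroup.closure (V' : Set G)) ∧
    Nat.card (AddSubgroup.closure (V' : Set G)) + V'.card ≤ U.card + V.card}

namespace PollardAux

variable {G : Type*} [AddCommGroup G] [DecidableEq G]

/-- The representation count `1_U * 1_V (x)`. -/
def cnt (U V : Finset G) (x : G) : ℕ :=
  ((U ×ˢ V).filter (fun p => p.1 + p.2 = x)).card

/-- The truncated sum. -/
def sFun (U V : Finset G) (t : ℕ) : ℕ :=
  ∑ x ∈ U + V, min (cnt U V x) t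

lemma cnt_le_card (U V : Finset G) (x : G) : cnt U V x ≤ V.card := by
  apply Finset.card_le_card_of_injOn Prod.snd
  · intro p hp
    simp only [Finset.mem_coe, Finset.mem_filter, Finset.mem_product] at hp
    exact hp.1.2
  · intro p hp q hq hpq
    simp only [Finset.mem_coe, Finset.mem_filter, Finset.mem_product] at hp hq
    have h1 : p.1 = q.1 := by
      have := hp.2.trans hq.2.symm
      rw [hpq] at this
      exact add_right_cancel this
    exact Prod.ext h1 hpq

lemma sum_cnt (U V : Finset G) : ∑ x ∈ U + V, cnt U V x = U.card * V.card := by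
  rw [← Finset.card_product]
  exact (Finset.card_eq_sum_card_fiberwise (fun p hp => by
    simp only [Finset.mem_coe, Finset.mem_product] at hp
    exact Finset.add_mem_add hp.1 hp.2)).symm

lemma sFun_of_card_le (U V : Finset G) (t : ℕ) (h : V.card ≤ t) :
    sFun U V t = U.card * V.card := by
  rw [← sum_cnt U V]
  apply Finset.sum_congr rfl
  intro x _
  exact min_eq_left ((cnt_le_card U V x).trans h)

/-- Generic lower bound `sFun U V t ≥ t * |U|` when `0 < t ≤ |V|`. -/
lemma t_mul_card_le_sFun (U V : Finset G) (t : ℕ) (ht : t ≤ V.card) :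
    t * U.card ≤ sFun U V t := by
  rcases Nat.eq_zero_or_pos V.card with h0 | hpos
  · have ht0 : t = 0 := by omega
    simp [ht0]
  have key : t * (U.card * V.card) ≤ V.card * sFun U V t := by
    rw [← sum_cnt U V, sFun, Finset.mul_sum, Finset.mul_sum]
    apply Finset.sum_le_sum
    intro x _
    rcases le_or_gt (cnt U V x) t with h | h
    · rw [min_eq_left h]
      exact Nat.mul_le_mul_right _ ht
    · rw [min_eq_right h.le]
      calc t * cnt U V x ≤ t * V.card := Nat.mul_le_mul_left _ (cnt_le_card U V x)
        _ = V.card * t := Nat.mul_comm _ _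
  have : V.card * (t * U.card) ≤ V.card * sFun U V t := by
    calc V.card * (t * U.card) = t * (U.card * V.card) := by ring
      _ ≤ V.card * sFun U V t := key
  exact Nat.le_of_mul_le_mul_left this hpos


section Transform

variable (A B : Finset G) (e : G)

/-- Dyson transform pieces. -/
def Ae : Finset G := A ∪ B.image (fun v => v + e)
def Be : Finset G := B.filter (fun v => v + e ∈ A)
def As : Finset G := A.filter (fun u => u - e ∉ B)
def Bs : Finset G := B.filter (fun v => v + e ∉ A)

lemma cnt_decomp (x : G) :
    cnt A B x = cnt (Ae A B e) (Be A B e) x + cnt (As A B e) (Bs A B e) x := by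
  classical
  set P : Finset (G × G) := (A ×ˢ B).filter (fun p => p.1 + p.2 = x) with hP
  set P1 : Finset (G × G) := ((Ae A B e) ×ˢ (Be A B e)).filter (fun p => p.1 + p.2 = x) with hP1
  set P2 : Finset (G × G) := ((As A B e) ×ˢ (Bs A B e)).filter (fun p => p.1 + p.2 = x) with hP2
  have hmemP : ∀ p : G × G, p ∈ P ↔ p.1 ∈ A ∧ p.2 ∈ B ∧ p.1 + p.2 = x := by
    intro p
    simp only [hP, Finset.mem_filter, Finset.mem_product, and_assoc]
  have hmemP1 : ∀ p : G × G, p ∈ P1 ↔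
      (p.1 ∈ A ∨ ∃ b ∈ B, b + e = p.1) ∧ (p.2 ∈ B ∧ p.2 + e ∈ A) ∧ p.1 + p.2 = x := by
    intro p
    simp only [hP1, Finset.mem_filter, Finset.mem_product, Ae, Be, Finset.mem_union,
      Finset.mem_image, Finset.mem_filter, and_assoc]
  have hmemP2 : ∀ p : G × G, p ∈ P2 ↔
      (p.1 ∈ A ∧ p.1 - e ∉ B) ∧ (p.2 ∈ B ∧ p.2 + e ∉ A) ∧ p.1 + p.2 = x := by
    intro p
    simp only [hP2, Finset.mem_filter, Finset.mem_product, As, Bs, Finset.mem_filter, and_assoc]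
  have hdisj : Disjoint P1 P2 := by
    rw [Finset.disjoint_left]
    intro p hp1 hp2
    rw [hmemP1] at hp1
    rw [hmemP2] at hp2
    exact hp2.2.1.2 hp1.2.1.2
  have hcard : P.card = P1.card + P2.card := by
    rw [← Finset.card_union_of_disjoint hdisj]
    apply Finset.card_bij' (i := fun p _ => if p.2 + e ∈ A then p else
        if p.1 - e ∈ B then (p.2 + e, p.1 - e) else p)
      (j := fun q _ => if q.1 ∈ A then q else (q.2 + e, q.1 - e))
    · -- hi : maps into P1 ∪ P2
      intro p hp
      rw [hmemP] at hp
      obtain ⟨ha, hb, hs⟩ := hp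
      by_cases h1 : p.2 + e ∈ A
      · rw [if_pos h1, Finset.mem_union, hmemP1]
        exact Or.inl ⟨Or.inl ha, ⟨hb, h1⟩, hs⟩
      · rw [if_neg h1]
        by_cases h2 : p.1 - e ∈ B
        · rw [if_pos h2, Finset.mem_union, hmemP1]
          refine Or.inl ⟨Or.inr ⟨p.2, hb, rfl⟩, ⟨h2, ?_⟩, ?_⟩
          · simpa using ha
          · simp only []
            rw [← hs]
            abel
        · rw [if_neg h2, Finset.mem_union, hmemP2]
          exact Or.inr ⟨⟨ha, h2⟩, ⟨hb, h1⟩, hs⟩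
    · -- hj : maps into P
      intro q hq
      rw [Finset.mem_union] at hq
      rcases hq with hq | hq
      · rw [hmemP1] at hq
        obtain ⟨hu, ⟨hv, hve⟩, hs⟩ := hq
        by_cases h1 : q.1 ∈ A
        · rw [if_pos h1, hmemP]
          exact ⟨h1, hv, hs⟩
        · rw [if_neg h1, hmemP]
          rcases hu with h | ⟨b, hbB, hbe⟩
          · exact absurd h h1
          · refine ⟨hve, ?_, ?_⟩
            · simp only []
              rw [← hbe]
              simpa using hbB
            · simp only []
              rw [← hs]
              abel
      · rw [hmemP2] at hq
        obtain ⟨⟨ha, _⟩, ⟨hb, _⟩, hs⟩ := hq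
        rw [if_pos ha, hmemP]
        exact ⟨ha, hb, hs⟩
    · -- left inverse
      intro p hp
      rw [hmemP] at hp
      obtain ⟨ha, hb, hs⟩ := hp
      by_cases h1 : p.2 + e ∈ A
      · rw [if_pos h1, if_pos ha]
      · rw [if_neg h1]
        by_cases h2 : p.1 - e ∈ B
        · rw [if_pos h2]
          have : ¬ ((p.2 + e : G) ∈ A) := h1
          rw [if_neg this]
          simp
        · rw [if_neg h2, if_pos ha]
    · -- right inverse
      intro q hq
      rw [Finset.mem_union] at hq
      rcases hq with hq | hq
      · rw [hmemP1] at hq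
        obtain ⟨hu, ⟨hv, hve⟩, hs⟩ := hq
        by_cases h1 : q.1 ∈ A
        · rw [if_pos h1, if_pos hve]
        · rw [if_neg h1]
          simp only [sub_add_cancel, add_sub_cancel_right]
          rw [if_neg h1, if_pos hv]
      · rw [hmemP2] at hq
        obtain ⟨⟨ha, hae⟩, ⟨hb, hbe⟩, hs⟩ := hq
        rw [if_pos ha, if_neg hbe, if_neg hae]
  rw [cnt, cnt, cnt, ← hP, ← hP1, ← hP2, hcard]

lemma card_Ae_add_card_Be :
    (Ae A B e).card + (Be A B e).card = A.card + B.card := by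
  have hinj : Function.Injective (fun v : G => v + e) := add_left_injective e
  have him : (Be A B e).image (fun v => v + e) = A ∩ B.image (fun v => v + e) := by
    ext z
    simp only [Be, Finset.mem_image, Finset.mem_filter, Finset.mem_inter]
    constructor
    · rintro ⟨v, ⟨hv, hve⟩, rfl⟩
      exact ⟨hve, v, hv, rfl⟩
    · rintro ⟨hz, v, hv, rfl⟩
      exact ⟨v, ⟨hv, hz⟩, rfl⟩
  have h1 : (Be A B e).card = (A ∩ B.image (fun v => v + e)).card := by
    rw [← him, Finset.card_image_of_injective _ hinj]
  have h2 := Finset.card_union_add_card_inter A (B.image (fun v => v + e))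
  rw [Ae, h1, h2, Finset.card_image_of_injective _ hinj]

lemma card_As_add_card_Be :
    (As A B e).card + (Be A B e).card = A.card := by
  have hinj : Function.Injective (fun v : G => v + e) := add_left_injective e
  have him : (Be A B e).image (fun v => v + e) = A.filter (fun u => u - e ∈ B) := by
    ext z
    simp only [Be, Finset.mem_image, Finset.mem_filter]
    constructor
    · rintro ⟨v, ⟨hv, hve⟩, rfl⟩
      refine ⟨hve, ?_⟩
      simpa using hv
    · rintro ⟨hz, hzB⟩
      exact ⟨z - e, ⟨hzB, by simpa using hz⟩, by simp⟩
  have h1 : (Be A B e).card = (A.filter (fun u => u - e ∈ B)).card := by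
    rw [← him, Finset.card_image_of_injective _ hinj]
  have h2 := Finset.card_filter_add_card_filter_not (s := A)
    (p := fun u => u - e ∈ B)
  rw [As, h1]
  omega

lemma card_Bs_add_card_Be :
    (Bs A B e).card + (Be A B e).card = B.card := by
  have h2 := Finset.card_filter_add_card_filter_not (s := B)
    (p := fun v => v + e ∈ A)
  rw [Bs, Be]
  omega

lemma Ae_add_Be_subset : (Ae A B e) + (Be A B e) ⊆ A + B := by
  intro z hz
  rw [Finset.mem_add] at hz
  obtain ⟨u, hu, v, hv, rfl⟩ := hz
  rw [Be, Finset.mem_filter] at hv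
  rw [Ae, Finset.mem_union] at hu
  rcases hu with hu | hu
  · exact Finset.add_mem_add hu hv.1
  · rw [Finset.mem_image] at hu
    obtain ⟨b, hb, rfl⟩ := hu
    have : (b + e) + v = (v + e) + b := by abel
    rw [this]
    exact Finset.add_mem_add hv.2 hb

lemma As_add_Bs_subset : (As A B e) + (Bs A B e) ⊆ A + B :=
  Finset.add_subset_add (Finset.filter_subset _ _) (Finset.filter_subset _ _)

lemma sFun_split (t1 t2 : ℕ) :
    sFun (Ae A B e) (Be A B e) t1 + sFun (As A B e) (Bs A B e) t2 ≤ sFun A B (t1 + t2) := by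
  have h1 : sFun (Ae A B e) (Be A B e) t1 ≤
      ∑ x ∈ A + B, min (cnt (Ae A B e) (Be A B e) x) t1 :=
    Finset.sum_le_sum_of_subset (Ae_add_Be_subset A B e)
  have h2 : sFun (As A B e) (Bs A B e) t2 ≤
      ∑ x ∈ A + B, min (cnt (As A B e) (Bs A B e) x) t2 :=
    Finset.sum_le_sum_of_subset (As_add_Bs_subset A B e)
  calc sFun (Ae A B e) (Be A B e) t1 + sFun (As A B e) (Bs A B e) t2
      ≤ ∑ x ∈ A + B, min (cnt (Ae A B e) (Be A B e) x) t1
        + ∑ x ∈ A + B, min (cnt (As A B e) (Bs A B e) x) t2 := add_le_add h1 h2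
    _ = ∑ x ∈ A + B, (min (cnt (Ae A B e) (Be A B e) x) t1
        + min (cnt (As A B e) (Bs A B e) x) t2) := Finset.sum_add_distrib.symm
    _ ≤ ∑ x ∈ A + B, min (cnt A B x) (t1 + t2) := by
        apply Finset.sum_le_sum
        intro x _
        rw [cnt_decomp A B e x]
        exact le_min (add_le_add (min_le_left _ _) (min_le_left _ _))
          (add_le_add (min_le_right _ _) (min_le_right _ _))
    _ = sFun A B (t1 + t2) := rfl

end Transform


def alphaSet (U V : Finset G) : Set ℕ :=
  {k : ℕ | ∃ V' : Finset G, V'.card = k ∧ V'.card ≤ V.card ∧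
    0 < Nat.card (AddSubgroup.closure (V' : Set G)) ∧
    Nat.card (AddSubgroup.closure (V' : Set G)) + V'.card ≤ U.card + V.card}

lemma alphaFn_eq (U V : Finset G) : alphaFn U V = sSup (alphaSet U V) := rfl

lemma alphaSet_bddAbove (U V : Finset G) : BddAbove (alphaSet U V) := by
  refine ⟨V.card, ?_⟩
  rintro k ⟨V', rfl, h, -, -⟩
  exact h

lemma zero_mem_alphaSet (U V : Finset G) (h : 0 < U.card + V.card) :
    0 ∈ alphaSet U V := by
  refine ⟨∅, Finset.card_empty, by simp, ?_, ?_⟩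
  · rw [Finset.coe_empty, AddSubgroup.closure_empty, AddSubgroup.card_bot]
    norm_num
  · rw [Finset.coe_empty, AddSubgroup.closure_empty, AddSubgroup.card_bot,
      Finset.card_empty]
    omega

lemma le_alphaFn (U V : Finset G) (k : ℕ) (hk : k ∈ alphaSet U V) :
    k ≤ alphaFn U V :=
  le_csSup (alphaSet_bddAbove U V) hk

lemma alphaFn_mono (U₁ V₁ U₂ V₂ : Finset G) (h1 : V₁.card ≤ V₂.card)
    (h2 : U₁.card + V₁.card ≤ U₂.card + V₂.card) (h3 : 0 < U₁.card + V₁.card) :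
    alphaFn U₁ V₁ ≤ alphaFn U₂ V₂ := by
  rw [alphaFn_eq, alphaFn_eq]
  refine csSup_le_csSup (alphaSet_bddAbove U₂ V₂) ⟨0, zero_mem_alphaSet U₁ V₁ h3⟩ ?_
  rintro k ⟨V', rfl, hc, hp, hs⟩
  exact ⟨V', rfl, hc.trans h1, hp, hs.trans h2⟩

lemma card_le_alphaFn_of_periodic (U V : Finset G) (hU : U.Nonempty) (hV : V.Nonempty)
    (hP : ∀ a ∈ U, ∀ b ∈ V, ∀ b' ∈ V, b' + (a - b) ∈ U) :
    V.card ≤ alphaFn U V := by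
  obtain ⟨b₀, hb₀⟩ := hV
  obtain ⟨a₀, ha₀⟩ := hU
  have hinj : Function.Injective (fun b : G => b - b₀) := by
    intro x y hxy
    simpa using sub_left_injective (b := b₀) hxy
  set V' : Finset G := V.image (fun b => b - b₀) with hV'
  -- U is invariant under translation by every element of V - b₀
  have hshift : ∀ d ∈ V', ∀ a ∈ U, a + d ∈ U := by
    intro d hd a ha
    rw [hV', Finset.mem_image] at hd
    obtain ⟨b, hb, rfl⟩ := hd
    have := hP a ha b₀ hb₀ b hb
    have heq : a + (b - b₀) = b + (a - b₀) := by abel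
    rwa [heq]
  -- hence under the closure
  have hstab : ∀ h ∈ AddSubgroup.closure (V' : Set G), ∀ a ∈ U, a + h ∈ U := by
    intro h hh
    induction hh using AddSubgroup.closure_induction with
    | mem x hx =>
        intro a ha
        exact hshift x (by exact_mod_cast hx) a ha
    | zero => intro a ha; simpa using ha
    | add x y hx hy ihx ihy =>
        intro a ha
        have : a + (x + y) = (a + x) + y := by abel
        rw [this]
        exact ihy _ (ihx a ha)
    | neg x hx ihx =>
        intro a ha
        have himg : U.image (fun u => u + x) = U := by
          apply Finset.eq_of_subset_of_card_le
          · intro z hz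
            rw [Finset.mem_image] at hz
            obtain ⟨u, hu, rfl⟩ := hz
            exact ihx u hu
          · rw [Finset.card_image_of_injective _ (add_left_injective _)]
        have : a ∈ U.image (fun u => u + x) := by rw [himg]; exact ha
        rw [Finset.mem_image] at this
        obtain ⟨u, hu, hux⟩ := this
        have : a + (-x) = u := by rw [← hux]; abel
        rwa [this]
  -- the closure embeds into U - a₀
  set W : Finset G := U.image (fun a => a - a₀) with hW
  have hsub : ((AddSubgroup.closure (V' : Set G) : AddSubgroup G) : Set G) ⊆ (W : Set G) := by
    intro h hh
    rw [hW, Finset.coe_image]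
    exact ⟨a₀ + h, hstab h hh a₀ ha₀, by simp⟩
  have hfin : (((AddSubgroup.closure (V' : Set G) : AddSubgroup G) : Set G)).Finite :=
    W.finite_toSet.subset hsub
  have hcardle : Nat.card (AddSubgroup.closure (V' : Set G)) ≤ U.card := by
    have h1 : Nat.card (AddSubgroup.closure (V' : Set G)) =
        ((AddSubgroup.closure (V' : Set G) : AddSubgroup G) : Set G).ncard := by
      rw [← Nat.card_coe_set_eq, SetLike.coe_sort_coe]
    rw [h1]
    calc ((AddSubgroup.closure (V' : Set G) : AddSubgroup G) : Set G).ncard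
        ≤ (W : Set G).ncard := Set.ncard_le_ncard hsub W.finite_toSet
      _ = W.card := Set.ncard_coe_finset W
      _ ≤ U.card := Finset.card_image_le
  have hpos : 0 < Nat.card (AddSubgroup.closure (V' : Set G)) := by
    have h1 : Nat.card (AddSubgroup.closure (V' : Set G)) =
        ((AddSubgroup.closure (V' : Set G) : AddSubgroup G) : Set G).ncard := by
      rw [← Nat.card_coe_set_eq, SetLike.coe_sort_coe]
    rw [h1]
    have : (0 : G) ∈ ((AddSubgroup.closure (V' : Set G) : AddSubgroup G) : Set G) :=
      (AddSubgroup.closure (V' : Set G)).zero_mem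
    exact Set.ncard_pos hfin |>.mpr ⟨0, this⟩
  have hVcard : V'.card = V.card := Finset.card_image_of_injective _ hinj
  apply le_alphaFn
  exact ⟨V', hVcard, le_of_eq hVcard, hpos, by omega⟩


lemma key_induction : ∀ (n : ℕ) (t : ℕ) (U V : Finset G), V.card ≤ n → 0 < t → t ≤ V.card →
    V.card ≤ U.card →
    t * (U.card + V.card) ≤ sFun U V t + t * t + t * alphaFn U V := by
  intro n
  induction n with
  | zero => intro t U V hn ht htV hVU; exfalso; omega
  | succ n ih =>
    intro t U V hn ht htV hVU
    rcases eq_or_lt_of_le htV with hbase | hlt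
    · -- base case t = |V|
      rw [sFun_of_card_le U V t hbase.symm.le, hbase]
      have e : V.card * (U.card + V.card) = U.card * V.card + V.card * V.card := by ring
      linarith [Nat.zero_le (V.card * alphaFn U V)]
    · by_cases hP : ∀ a ∈ U, ∀ b ∈ V, ∀ b' ∈ V, b' + (a - b) ∈ U
      · -- periodic case
        have hU : U.Nonempty := Finset.card_pos.mp (by omega)
        have hV : V.Nonempty := Finset.card_pos.mp (by omega)
        have h1 := card_le_alphaFn_of_periodic U V hU hV hP
        have h2 := t_mul_card_le_sFun U V t htV
        have h3 : t * V.card ≤ t * alphaFn U V := mul_le_mul_right h1 t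
        have e : t * (U.card + V.card) = t * U.card + t * V.card := by ring
        linarith [Nat.zero_le (t * t)]
      · -- transform case
        push_neg at hP
        obtain ⟨a, ha, b, hb, b', hb', hnb⟩ := hP
        set e := a - b with he
        have hbBe : b ∈ Be U V e := by
          rw [Be, Finset.mem_filter]
          refine ⟨hb, ?_⟩
          have : b + e = a := by rw [he]; abel
          rwa [this]
        have hb'Bs : b' ∈ Bs U V e := by
          rw [Bs, Finset.mem_filter]
          exact ⟨hb', hnb⟩
        set m := (Be U V e).card with hm
        have hm1 : 1 ≤ m := Finset.card_pos.mpr ⟨b, hbBe⟩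
        have hBs1 : 1 ≤ (Bs U V e).card := Finset.card_pos.mpr ⟨b', hb'Bs⟩
        have hAeBe := card_Ae_add_card_Be U V e
        have hAsBe := card_As_add_card_Be U V e
        have hBsBe := card_Bs_add_card_Be U V e
        have hmlt : m < V.card := by omega
        rcases le_or_gt t m with htm | hmt
        · -- t ≤ m : single transform suffices
          have hsplit := sFun_split U V e t 0
          have hzero : sFun (As U V e) (Bs U V e) 0 = 0 := by simp [sFun]
          rw [hzero, add_zero, add_zero] at hsplit
          have hIH := ih t (Ae U V e) (Be U V e) (by omega) ht htm (by omega)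
          have halpha : alphaFn (Ae U V e) (Be U V e) ≤ alphaFn U V :=
            alphaFn_mono _ _ _ _ (by omega) (by omega) (by omega)
          have h3 : t * alphaFn (Ae U V e) (Be U V e) ≤ t * alphaFn U V :=
            mul_le_mul_right halpha t
          have e1 : (Ae U V e).card + (Be U V e).card = U.card + V.card := by omega
          rw [e1] at hIH
          linarith
        · -- m < t : split the truncation
          obtain ⟨t', rfl⟩ : ∃ t', t = m + t' := ⟨t - m, by omega⟩
          have ht' : 1 ≤ t' := by omega
          have hsplit := sFun_split U V e m t'
          have hbase2 : sFun (Ae U V e) (Be U V e) m = (Ae U V e).card * m :=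
            sFun_of_card_le _ _ _ le_rfl
          rw [hbase2] at hsplit
          have hIH := ih t' (As U V e) (Bs U V e) (by omega) ht' (by omega) (by omega)
          have halpha : alphaFn (As U V e) (Bs U V e) ≤ alphaFn U V :=
            alphaFn_mono _ _ _ _ (by omega) (by omega) (by omega)
          have h3 : t' * alphaFn (As U V e) (Bs U V e) ≤ t' * alphaFn U V :=
            mul_le_mul_right halpha t'
          -- arithmetic
          have hae : (Ae U V e).card + m = U.card + V.card := by omega
          have has : (As U V e).card + m = U.card := by omega
          have hbs : (Bs U V e).card + m = V.card := by omega
          have e0 : (m + t') * (U.card + V.card)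
              = m * (U.card + V.card) + t' * (U.card + V.card) := by ring
          have e2 : m * (U.card + V.card) = m * (Ae U V e).card + m * m := by
            rw [← hae]; ring
          have e3 : t' * (U.card + V.card)
              = t' * ((As U V e).card + (Bs U V e).card) + 2 * (t' * m) := by
            have h : U.card + V.card = (As U V e).card + (Bs U V e).card + 2 * m := by omega
            rw [h]; ring
          have e4 : (m + t') * (m + t') = m * m + t' * t' + 2 * (t' * m) := by ring
          have e5 : (m + t') * alphaFn U V = m * alphaFn U V + t' * alphaFn U V := by ring
          have e6 : m * (Ae U V e).card = (Ae U V e).card * m := by ring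
          linarith [Nat.zero_le (m * alphaFn U V)]

end PollardAux

/-- (Pollard-type theorem for abelian groups.) Let `t ≥ 1` and let
`U, V ⊆ G` be finite with `t ≤ |V| ≤ |U|`. Then
`∑_{x ∈ G} min(1_U*1_V(x), t) ≥ t(|U| + |V| - t - α(U,V))`. -/
theorem pollard_type_theorem {G : Type*} [AddCommGroup G] [DecidableEq G]
    (t : ℕ) (ht : 0 < t) (U V : Finset G) (htV : t ≤ V.card) (hVU : V.card ≤ U.card) :
    (t : ℝ) * ((U.card : ℝ) + (V.card : ℝ) - (t : ℝ) - (alphaFn U V : ℝ)) ≤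
      ((∑ x ∈ U + V, min (((U ×ˢ V).filter (fun p => p.1 + p.2 = x)).card) t : ℕ) : ℝ) := by
  have key := PollardAux.key_induction V.card t U V le_rfl ht htV hVU
  have hsum : (∑ x ∈ U + V, min (((U ×ˢ V).filter (fun p => p.1 + p.2 = x)).card) t : ℕ)
      = PollardAux.sFun U V t := rfl
  rw [hsum]
  have hcast : ((t * (U.card + V.card) : ℕ) : ℝ)
      ≤ ((PollardAux.sFun U V t + t * t + t * alphaFn U V : ℕ) : ℝ) := by
    exact_mod_cast key
  push_cast at hcast
  nlinarith [hcast]
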